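/- arXiv:2509.17943 — 2 statements merged into one kernel-verified Lean document; each statement's English description precedes it below -/
import Mathlib

section
/- Let X ∈ ℝ^{N×D} have full column rank D, Y ∈ ℝ^{N×C}, 1 ≤ K ≤ D, and Ŷ := X(XᵀX)⁻¹XᵀY. Assume λ_K(ŶŶᵀ) > λ_{K+1}(ŶŶᵀ) and λ_K(ŶŶᵀ) > 0. Then for every global minimizer (V*, W*) of (V, W) ↦ ‖XVW − Y‖_F² over V ∈ ℝ^{D×K}, W ∈ ℝ^{K×C}, the column space of XV* equals the top-K eigenspace of ŶŶᵀ (the K-dimensional span of eigenvectors of ŶŶᵀ associated with its K largest eigenvalues). -/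
open Matrix BigOperators

noncomputable section

/-- Squared Frobenius norm of a real matrix. -/
def frobSq {m n : Type*} [Fintype m] [Fintype n] (M : Matrix m n ℝ) : ℝ :=
  ∑ i, ∑ j, (M i j) ^ 2

/-- `AᵀA` is Hermitian over `ℝ`. -/
theorem isHermitian_tmul {m n : ℕ} (A : Matrix (Fin m) (Fin n) ℝ) :
    (Aᵀ * A).IsHermitian := by
  simpa [Matrix.conjTranspose_eq_transpose_of_trivial] using
    Matrix.isHermitian_conjTranspose_mul_self A

/-- `AAᵀ` is Hermitian over `ℝ`. -/
theorem isHermitian_mult {m n : ℕ} (A : Matrix (Fin m) (Fin n) ℝ) :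
    (A * Aᵀ).IsHermitian := by
  simpa [Matrix.conjTranspose_eq_transpose_of_trivial] using
    Matrix.isHermitian_mul_conjTranspose_self A

/-- The `i`-th eigenvalue of a real symmetric (Hermitian) matrix, in decreasing order
(`eigDesc hM 0` is the largest eigenvalue, counted with multiplicity). -/
def eigDesc {n : ℕ} {M : Matrix (Fin n) (Fin n) ℝ} (hM : M.IsHermitian) (i : Fin n) : ℝ :=
  hM.eigenvalues (Tuple.sort hM.eigenvalues i.rev)

/-- Sum of the `K` largest eigenvalues of a Hermitian matrix. -/
def sumTopEig {n : ℕ} {M : Matrix (Fin n) (Fin n) ℝ} (hM : M.IsHermitian) (K : ℕ) : ℝ :=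
  ∑ i : Fin n, if (i : ℕ) < K then eigDesc hM i else 0

/-- Sum of the eigenvalues of a Hermitian matrix after the `K` largest ones. -/
def sumTailEig {n : ℕ} {M : Matrix (Fin n) (Fin n) ℝ} (hM : M.IsHermitian) (K : ℕ) : ℝ :=
  ∑ i : Fin n, if K ≤ (i : ℕ) then eigDesc hM i else 0

/-- Top-`K` eigenspace of a Hermitian matrix: the sum of the eigenspaces associated with
its `K` largest eigenvalues. -/
def topEigSpace {n : ℕ} {M : Matrix (Fin n) (Fin n) ℝ} (hM : M.IsHermitian) (K : ℕ) :
    Submodule ℝ (Fin n → ℝ) :=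
  ⨆ i : {i : Fin n // (i : ℕ) < K},
    LinearMap.ker (M.mulVecLin - eigDesc hM i.1 • LinearMap.id)

/-- Ordinary least squares prediction of `Y` from `X`. -/
def ols {N D C : ℕ} (X : Matrix (Fin N) (Fin D) ℝ) (Y : Matrix (Fin N) (Fin C) ℝ) :
    Matrix (Fin N) (Fin C) ℝ :=
  X * (Xᵀ * X)⁻¹ * Xᵀ * Y

/-! ### Auxiliary lemmas -/

lemma sum_dot {N : ℕ} {ι : Type*} [Fintype ι] (g : ι → (Fin N → ℝ)) (x : Fin N → ℝ) :
    (∑ l, g l) ⬝ᵥ x = ∑ l, g l ⬝ᵥ x := by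
  simp [dotProduct, Finset.sum_apply, Finset.sum_mul]
  exact Finset.sum_comm

lemma dot_sum {N : ℕ} {ι : Type*} [Fintype ι] (g : ι → (Fin N → ℝ)) (x : Fin N → ℝ) :
    x ⬝ᵥ (∑ l, g l) = ∑ l, x ⬝ᵥ g l := by
  rw [dotProduct_comm, sum_dot]
  exact Finset.sum_congr rfl fun l _ => dotProduct_comm _ _

lemma mv_sum {N C : ℕ} {ι : Type*} [Fintype ι] (M : Matrix (Fin N) (Fin C) ℝ)
    (g : ι → (Fin C → ℝ)) : M *ᵥ (∑ l, g l) = ∑ l, M *ᵥ g l :=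
  map_sum M.mulVecLin g Finset.univ

/-- Generic expansion of the squared distance to a combination of an orthonormal family. -/
lemma dot_expand {N : ℕ} {ι : Type*} [Fintype ι] [DecidableEq ι] (f : ι → (Fin N → ℝ))
    (hf : ∀ l m, f l ⬝ᵥ f m = if l = m then 1 else 0)
    (x : Fin N → ℝ) (c : ι → ℝ) :
    (x - ∑ l, c l • f l) ⬝ᵥ (x - ∑ l, c l • f l)
      = x ⬝ᵥ x - (∑ l, (f l ⬝ᵥ x) ^ 2) + ∑ l, (c l - f l ⬝ᵥ x) ^ 2 := by
  have hsx : (∑ l, c l • f l) ⬝ᵥ x = ∑ l, c l * (f l ⬝ᵥ x) := by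
    rw [sum_dot]; exact Finset.sum_congr rfl fun l _ => by rw [smul_dotProduct]; simp
  have hxs : x ⬝ᵥ (∑ l, c l • f l) = ∑ l, c l * (f l ⬝ᵥ x) := by
    rw [dotProduct_comm]; exact hsx
  have hss : (∑ l, c l • f l) ⬝ᵥ (∑ l, c l • f l) = ∑ l, (c l) ^ 2 := by
    rw [sum_dot]
    refine Finset.sum_congr rfl fun l _ => ?_
    rw [smul_dotProduct, dotProduct_comm, sum_dot]
    rw [Finset.sum_eq_single l]
    · rw [smul_dotProduct, hf l l]; simp [sq]
    · intro m _ hm; rw [smul_dotProduct, hf m l]; simp [hm]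
    · simp
  rw [sub_dotProduct, dotProduct_sub, dotProduct_sub, hss, hsx, hxs]
  have : ∀ l : ι, (c l - f l ⬝ᵥ x) ^ 2 = (c l)^2 - 2 * (c l * (f l ⬝ᵥ x)) + (f l ⬝ᵥ x)^2 :=
    fun l => by ring
  simp only [this, Finset.sum_add_distrib, Finset.sum_sub_distrib]
  rw [← Finset.mul_sum]
  ring

lemma sum_sq_dot {N C : ℕ} (Z : Matrix (Fin N) (Fin C) ℝ) (v : Fin N → ℝ) :
    ∑ j, (v ⬝ᵥ (fun i => Z i j)) ^ 2 = v ⬝ᵥ ((Z * Zᵀ) *ᵥ v) := by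
  simp only [dotProduct, mulVec, Matrix.mul_apply, transpose_apply, Finset.sum_mul,
    Finset.mul_sum, sq]
  rw [Finset.sum_comm]
  refine Finset.sum_congr rfl fun a _ => ?_
  rw [Finset.sum_comm]
  refine Finset.sum_congr rfl fun j _ => ?_
  exact Finset.sum_congr rfl fun b _ => by ring

lemma frobSq_cols {N C : ℕ} (Z : Matrix (Fin N) (Fin C) ℝ) :
    frobSq Z = ∑ j, (fun i => Z i j) ⬝ᵥ (fun i => Z i j) := by
  rw [frobSq, Finset.sum_comm]
  exact Finset.sum_congr rfl fun j _ => Finset.sum_congr rfl fun i _ => by simp [sq, dotProduct]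

lemma frobSq_sub_comm {m n : Type*} [Fintype m] [Fintype n] (A B : Matrix m n ℝ) :
    frobSq (A - B) = frobSq (B - A) := by
  unfold frobSq
  refine Finset.sum_congr rfl fun i _ => Finset.sum_congr rfl fun j _ => ?_
  simp [Matrix.sub_apply]; ring

lemma frobSq_pyth {m n : Type*} [Fintype m] [Fintype n] (A B : Matrix m n ℝ)
    (h : ∑ i, ∑ j, A i j * B i j = 0) :
    frobSq (A + B) = frobSq A + frobSq B := by
  unfold frobSq
  have he : ∀ i j, (A i j + B i j)^2 = A i j ^2 + B i j ^2 + 2 * (A i j * B i j) := by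
    intros; ring
  simp only [Matrix.add_apply, he, Finset.sum_add_distrib]
  have h2 : ∑ i : m, ∑ j : n, 2 * (A i j * B i j) = 2 * ∑ i : m, ∑ j : n, A i j * B i j := by
    rw [Finset.mul_sum]
    exact Finset.sum_congr rfl fun i _ => by rw [Finset.mul_sum]
  rw [h2, h]
  ring

lemma cross_zero {N D C : ℕ} (X : Matrix (Fin N) (Fin D) ℝ) (G : Matrix (Fin D) (Fin C) ℝ)
    (R : Matrix (Fin N) (Fin C) ℝ) (h : Xᵀ * R = 0) :
    ∑ i, ∑ j, (X * G) i j * R i j = 0 := by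
  have hc : ∀ j : Fin C, ∑ i, (X * G) i j * R i j = ∑ d, G d j * (Xᵀ * R) d j := by
    intro j
    simp only [Matrix.mul_apply, transpose_apply, Finset.sum_mul, Finset.mul_sum]
    rw [Finset.sum_comm]
    exact Finset.sum_congr rfl fun d _ => Finset.sum_congr rfl fun i _ => by ring
  rw [Finset.sum_comm]
  refine Finset.sum_eq_zero fun j _ => ?_
  rw [hc j, h]
  simp

lemma sum_emb {N K : ℕ} {M : Type*} [AddCommMonoid M] (hKN : K ≤ N) (g : Fin N → M) :
    ∑ k : Fin K, g (Fin.castLE hKN k)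
      = ∑ i : Fin N, if (i : ℕ) < K then g i else 0 := by
  rw [Finset.sum_ite, Finset.sum_const_zero, add_zero]
  have hset : Finset.filter (fun i : Fin N => (i : ℕ) < K) Finset.univ
      = Finset.map ⟨Fin.castLE hKN, Fin.castLE_injective hKN⟩ Finset.univ := by
    ext i
    simp only [Finset.mem_filter, Finset.mem_univ, true_and, Finset.mem_map,
      Function.Embedding.coeFn_mk]
    constructor
    · intro h; refine ⟨⟨(i : ℕ), h⟩, ?_⟩; apply Fin.ext; simp
    · rintro ⟨k, rfl⟩; exact k.isLt
  rw [hset, Finset.sum_map]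
  rfl

/-- Ky Fan equality analysis. -/
lemma kyfan_eq {N K : ℕ} (hKN : K < N) (μ c : Fin N → ℝ)
    (hanti : ∀ i j : Fin N, i ≤ j → μ j ≤ μ i)
    (ht0 : 0 ≤ μ ⟨K, hKN⟩)
    (hc0 : ∀ i, 0 ≤ c i) (hc1 : ∀ i, c i ≤ 1)
    (hcs : ∑ i, c i ≤ (K : ℝ))
    (hge : ∑ i : Fin N, (if (i : ℕ) < K then μ i else 0) ≤ ∑ i, μ i * c i)
    (hgap : ∀ i : Fin N, (i : ℕ) < K → μ ⟨K, hKN⟩ < μ i) :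
    ∀ i : Fin N, (i : ℕ) < K → c i = 1 := by
  set t := μ ⟨K, hKN⟩ with ht
  set d : Fin N → ℝ := fun i => if (i : ℕ) < K then (μ i - t) * (1 - c i) else (t - μ i) * c i
    with hd
  have hd0 : ∀ i, 0 ≤ d i := by
    intro i
    by_cases h : (i : ℕ) < K
    · simp only [hd, if_pos h]
      exact mul_nonneg (by linarith [hgap i h]) (by linarith [hc1 i])
    · simp only [hd, if_neg h]
      have : μ i ≤ t := hanti ⟨K, hKN⟩ i (by simp [Fin.le_def]; omega)
      exact mul_nonneg (by linarith) (hc0 i)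
  have hcard : ∑ i : Fin N, (if (i : ℕ) < K then (1:ℝ) else 0) = (K : ℝ) := by
    rw [← sum_emb (le_of_lt hKN) (fun _ => (1:ℝ))]
    simp
  have hsum : ∑ i, d i = (∑ i : Fin N, (if (i : ℕ) < K then μ i else 0) - ∑ i, μ i * c i)
      + t * (∑ i, c i - K) := by
    have hdi : ∀ i : Fin N, d i = (if (i : ℕ) < K then μ i - t * 1 else 0)
        - (μ i * c i - t * c i) := by
      intro i
      by_cases h : (i : ℕ) < K
      · simp only [hd, if_pos h]; ring
      · simp only [hd, if_neg h]; ring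
    have e1 : ∑ i : Fin N, (if (i : ℕ) < K then μ i - t * 1 else 0)
        = (∑ i : Fin N, if (i : ℕ) < K then μ i else 0) - t * K := by
      have h' : ∀ i : Fin N, (if (i : ℕ) < K then μ i - t * 1 else 0)
          = (if (i : ℕ) < K then μ i else 0) - t * (if (i : ℕ) < K then (1:ℝ) else 0) := by
        intro i; by_cases h : (i : ℕ) < K <;> simp [h]
      simp only [h', Finset.sum_sub_distrib, ← Finset.mul_sum, hcard]
    have e2 : ∑ i : Fin N, (μ i * c i - t * c i) = ∑ i, μ i * c i - t * ∑ i, c i := by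
      simp only [Finset.sum_sub_distrib, ← Finset.mul_sum]
    simp only [hdi, Finset.sum_sub_distrib, e1, e2]
    ring
  have hle : ∑ i, d i ≤ 0 := by
    rw [hsum]
    have h1 : t * (∑ i, c i - K) ≤ 0 := mul_nonpos_of_nonneg_of_nonpos ht0 (by linarith)
    linarith
  have hzero : ∀ i ∈ Finset.univ, d i = 0 := by
    intro i _
    have hge0 := Finset.sum_nonneg (fun i (_ : i ∈ Finset.univ) => hd0 i)
    have heq : ∑ i, d i = 0 := le_antisymm hle hge0
    exact (Finset.sum_eq_zero_iff_of_nonneg (fun i _ => hd0 i)).mp heq i (Finset.mem_univ i)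
  intro i hi
  have hz := hzero i (Finset.mem_univ i)
  simp only [hd, if_pos hi] at hz
  rcases mul_eq_zero.mp hz with h | h
  · exact absurd h (by have := hgap i hi; intro hc; linarith)
  · linarith

/-- Orthonormal basis of the column space of a matrix, as plain vectors. -/
lemma on_range {N C : ℕ} (A : Matrix (Fin N) (Fin C) ℝ) :
    ∃ f : Fin (A.rank) → (Fin N → ℝ),
      (∀ l m, f l ⬝ᵥ f m = if l = m then 1 else 0) ∧
      (∀ l, f l ∈ LinearMap.range A.mulVecLin) ∧
      (∀ x ∈ LinearMap.range A.mulVecLin, x = ∑ l, (f l ⬝ᵥ x) • f l) := by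
  classical
  set S₀ := LinearMap.range A.mulVecLin with hS₀
  set eqv : (Fin N → ℝ) ≃ₗ[ℝ] EuclideanSpace ℝ (Fin N) :=
    (WithLp.linearEquiv 2 ℝ (Fin N → ℝ)).symm with heqv
  set S : Submodule ℝ (EuclideanSpace ℝ (Fin N)) := S₀.map eqv.toLinearMap with hS
  have hrk : Module.finrank ℝ S = A.rank := by
    rw [hS, LinearEquiv.finrank_map_eq]
    rfl
  have b0 := stdOrthonormalBasis ℝ S
  rw [hrk] at b0
  set b := b0 with hb
  refine ⟨fun l => ((b l : EuclideanSpace ℝ (Fin N)) : Fin N → ℝ), ?_, ?_, ?_⟩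
  · intro l m
    have h := b.orthonormal
    rw [orthonormal_iff_ite] at h
    have := h l m
    rw [Submodule.coe_inner] at this
    simpa [PiLp.inner_apply, RCLike.inner_apply, dotProduct, eq_comm, mul_comm] using this
  · intro l
    have hmem : ((b l : EuclideanSpace ℝ (Fin N))) ∈ S := (b l).2
    rcases Submodule.mem_map.mp hmem with ⟨x, hx, hxe⟩
    have hco : ((b l : EuclideanSpace ℝ (Fin N)) : Fin N → ℝ) = x := by rw [← hxe]; rfl
    show ((b l : EuclideanSpace ℝ (Fin N)) : Fin N → ℝ) ∈ S₀
    rw [hco]; exact hx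
  · intro x hx
    have hmemS : eqv x ∈ S := Submodule.mem_map.mpr ⟨x, hx, rfl⟩
    have h := b.sum_repr' (⟨eqv x, hmemS⟩ : S)
    have h2 := congrArg (Submodule.subtype S) h
    rw [map_sum] at h2
    simp only [_root_.map_smul, Submodule.coe_subtype] at h2
    have h3 := congrArg (WithLp.linearEquiv 2 ℝ (∀ _ : Fin N, ℝ)) h2
    rw [map_sum] at h3
    simp only [_root_.map_smul] at h3
    have h4 : ∀ l, (inner ℝ (b l) (⟨eqv x, hmemS⟩ : S) : ℝ)
        = ((b l : EuclideanSpace ℝ (Fin N)) : Fin N → ℝ) ⬝ᵥ x := by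
      intro l
      rw [Submodule.coe_inner]
      simp [PiLp.inner_apply, RCLike.inner_apply, dotProduct]
      exact Finset.sum_congr rfl fun i _ => mul_comm _ _
    calc x = ∑ l, (inner ℝ (b l) (⟨eqv x, hmemS⟩ : S) : ℝ)
          • ((b l : EuclideanSpace ℝ (Fin N)) : Fin N → ℝ) := h3.symm
      _ = _ := Finset.sum_congr rfl fun l _ => by rw [h4]

/-- Orthonormal eigenbasis sorted by decreasing eigenvalue. -/
lemma eig_setup {N : ℕ} {M : Matrix (Fin N) (Fin N) ℝ} (hM : M.IsHermitian) :
    ∃ w : Fin N → (Fin N → ℝ),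
      (∀ i j, w i ⬝ᵥ w j = if i = j then 1 else 0) ∧
      (∀ i, M *ᵥ w i = eigDesc hM i • w i) ∧
      (∀ x : Fin N → ℝ, x = ∑ i, (w i ⬝ᵥ x) • w i) ∧
      (∀ i j : Fin N, i ≤ j → eigDesc hM j ≤ eigDesc hM i) := by
  classical
  set σ : Equiv.Perm (Fin N) := Tuple.sort hM.eigenvalues with hσ
  set e : Fin N ≃ Fin N := (Fin.revPerm : Equiv.Perm (Fin N)).trans σ with he
  set b := hM.eigenvectorBasis with hb
  refine ⟨fun i => (⇑(b (e i)) : Fin N → ℝ), ?_, ?_, ?_, ?_⟩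
  · intro i j
    have h := b.orthonormal
    rw [orthonormal_iff_ite] at h
    have := h (e i) (e j)
    simpa [PiLp.inner_apply, RCLike.inner_apply, dotProduct, eq_comm, mul_comm,
      EmbeddingLike.apply_eq_iff_eq] using this
  · intro i
    have := hM.mulVec_eigenvectorBasis (e i)
    rw [← hb] at this
    exact this
  · intro x
    have hfull : x = ∑ j, ((⇑(b j) : Fin N → ℝ) ⬝ᵥ x) • (⇑(b j) : Fin N → ℝ) := by
      have h := congrArg (WithLp.linearEquiv 2 ℝ (∀ _ : Fin N, ℝ))
        (b.sum_repr' (WithLp.toLp 2 x))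
      rw [map_sum] at h
      simp only [_root_.map_smul] at h
      have h2 : ∀ j : Fin N, (inner ℝ (b j) (WithLp.toLp 2 x) : ℝ)
          = (⇑(b j) : Fin N → ℝ) ⬝ᵥ x := fun j => by
        simp [PiLp.inner_apply, RCLike.inner_apply, dotProduct, mul_comm]
      calc x = ∑ j, (inner ℝ (b j) (WithLp.toLp 2 x) : ℝ) • (⇑(b j) : Fin N → ℝ) :=
            h.symm
        _ = _ := Finset.sum_congr rfl fun j _ => by rw [h2]
    conv_lhs => rw [hfull]
    exact (Equiv.sum_comp e fun j => ((⇑(b j) : Fin N → ℝ) ⬝ᵥ x) • (⇑(b j) : Fin N → ℝ)).symm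
  · intro i j hij
    unfold eigDesc
    have hmono := Tuple.monotone_sort hM.eigenvalues
    exact hmono (by rwa [Fin.rev_le_rev])

lemma col_mem_range {N C : ℕ} (A : Matrix (Fin N) (Fin C) ℝ) (j : Fin C) :
    (fun i => A i j) ∈ LinearMap.range A.mulVecLin := by
  classical
  refine ⟨Pi.single j 1, ?_⟩
  funext i
  simp [mulVecLin_apply, mulVec, dotProduct, Pi.single_apply, mul_ite]

/-- span characterization of the optimal encoder. Under the eigen-gap
condition `λ_K(ŶŶᵀ) > λ_{K+1}(ŶŶᵀ)` and `λ_K(ŶŶᵀ) > 0`, for every global minimizer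
`(V*, W*)` of `(V, W) ↦ ‖XVW − Y‖_F²`, the column space of `XV*` equals the top-`K`
eigenspace of `ŶŶᵀ`, where `Ŷ = X(XᵀX)⁻¹XᵀY`. -/
theorem stmt_7 {N D C K : ℕ}
    (X : Matrix (Fin N) (Fin D) ℝ) (Y : Matrix (Fin N) (Fin C) ℝ)
    (hrank : X.rank = D) (hK1 : 1 ≤ K) (hKD : K ≤ D) (hKN : K < N)
    (hgap : eigDesc (isHermitian_mult (ols X Y)) ⟨K - 1, by omega⟩
          > eigDesc (isHermitian_mult (ols X Y)) ⟨K, hKN⟩)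
    (hpos : 0 < eigDesc (isHermitian_mult (ols X Y)) ⟨K - 1, by omega⟩) :
    ∀ (Vs : Matrix (Fin D) (Fin K) ℝ) (Ws : Matrix (Fin K) (Fin C) ℝ),
      (∀ (V : Matrix (Fin D) (Fin K) ℝ) (W : Matrix (Fin K) (Fin C) ℝ),
        frobSq (X * Vs * Ws - Y) ≤ frobSq (X * V * W - Y)) →
      LinearMap.range (Matrix.mulVecLin (X * Vs))
        = topEigSpace (isHermitian_mult (ols X Y)) K := by
  intro Vs Ws hmin
  classical
  -- setup
  set Yh := ols X Y with hYh
  obtain ⟨w, hw_on, hw_eig, hw_comp, hμ_anti⟩ := eig_setup (isHermitian_mult Yh)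
  set μ : Fin N → ℝ := fun i => eigDesc (isHermitian_mult Yh) i with hμdef
  have hμ_anti' : ∀ i j : Fin N, i ≤ j → μ j ≤ μ i := hμ_anti
  have hpsd : (Yh * Yhᵀ).PosSemidef := by
    simpa [Matrix.conjTranspose_eq_transpose_of_trivial] using
      Matrix.posSemidef_self_mul_conjTranspose Yh
  have hμ0 : ∀ i, 0 ≤ μ i := by
    intro i
    show (0:ℝ) ≤ eigDesc (isHermitian_mult Yh) i
    unfold eigDesc
    exact hpsd.eigenvalues_nonneg _
  set K1 : Fin N := ⟨K - 1, by omega⟩ with hK1def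
  set KN : Fin N := ⟨K, hKN⟩ with hKNdef
  have hpos' : 0 < μ K1 := hpos
  have hgap' : μ KN < μ K1 := hgap
  have hgapK : ∀ i : Fin N, (i : ℕ) < K → μ KN < μ i := by
    intro i hi
    refine lt_of_lt_of_le hgap' (hμ_anti' i K1 ?_)
    rw [Fin.le_def]
    simp only [hK1def]
    omega
  have hμposK : ∀ i : Fin N, (i : ℕ) < K → 0 < μ i := fun i hi =>
    lt_of_lt_of_le hpos' (hμ_anti' i K1 (by rw [Fin.le_def]; simp only [hK1def]; omega))
  -- dot product basics
  have hvv0 : ∀ v : Fin N → ℝ, 0 ≤ v ⬝ᵥ v := fun v =>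
    Finset.sum_nonneg fun i _ => mul_self_nonneg _
  have hvv : ∀ v : Fin N → ℝ, v ≠ 0 → 0 < v ⬝ᵥ v := by
    intro v hv
    rcases lt_or_eq_of_le (hvv0 v) with h | h
    · exact h
    · exact absurd (dotProduct_self_eq_zero.mp h.symm) hv
  have hdot_sub_comm : ∀ u v : Fin N → ℝ, (u - v) ⬝ᵥ (u - v) = (v - u) ⬝ᵥ (v - u) := by
    intro u v
    have : u - v = -(v - u) := by abel
    rw [this, neg_dotProduct, dotProduct_neg, neg_neg]
  -- Parseval for the eigenbasis
  have hpar : ∀ x : Fin N → ℝ, x ⬝ᵥ x = ∑ i, (w i ⬝ᵥ x) ^ 2 := by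
    intro x
    have h := dot_expand w hw_on x (fun i => w i ⬝ᵥ x)
    rw [← hw_comp x, sub_self] at h
    simp at h
    linarith [h]
  -- quadratic form in the eigenbasis
  have hquad : ∀ v : Fin N → ℝ, v ⬝ᵥ ((Yh * Yhᵀ) *ᵥ v) = ∑ i, μ i * (w i ⬝ᵥ v) ^ 2 := by
    intro v
    have he : ∀ i : Fin N, (Yh * Yhᵀ) *ᵥ ((w i ⬝ᵥ v) • w i) = ((w i ⬝ᵥ v) * μ i) • w i := by
      intro i
      rw [Matrix.mulVec_smul, hw_eig i, smul_smul]
    have hMv : (Yh * Yhᵀ) *ᵥ v = ∑ i, ((w i ⬝ᵥ v) * μ i) • w i := by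
      conv_lhs => rw [hw_comp v]
      rw [mv_sum]
      exact Finset.sum_congr rfl fun i _ => he i
    rw [hMv, dot_sum]
    refine Finset.sum_congr rfl fun i _ => ?_
    rw [dotProduct_smul, smul_eq_mul, dotProduct_comm v (w i)]
    ring
  -- sum over columns of squared coefficients
  have hcolsum : ∀ v : Fin N → ℝ, ∑ j, (v ⬝ᵥ (fun i => Yh i j)) ^ 2
      = ∑ i, μ i * (w i ⬝ᵥ v) ^ 2 := by
    intro v
    rw [sum_sq_dot Yh v, hquad]
  have hμ_from_w : ∀ i : Fin N, ∑ j, (w i ⬝ᵥ (fun a => Yh a j)) ^ 2 = μ i := by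
    intro i
    rw [sum_sq_dot, hw_eig i, dotProduct_smul, smul_eq_mul, hw_on i i]
    simp
    rfl
  -- invertibility of XᵀX
  have hXinj : Function.Injective X.mulVecLin := by
    rw [← LinearMap.ker_eq_bot]
    have h1 := LinearMap.finrank_range_add_finrank_ker X.mulVecLin
    rw [Module.finrank_fintype_fun_eq_card, Fintype.card_fin] at h1
    have h2 : Module.finrank ℝ (LinearMap.range X.mulVecLin) = D := hrank
    rw [h2] at h1
    have h3 : Module.finrank ℝ (LinearMap.ker X.mulVecLin) = 0 := by omega
    exact Submodule.finrank_eq_zero.mp h3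
  have hdet : IsUnit (Xᵀ * X).det := by
    have hpd : (Xᵀ * X).PosDef := by
      refine posDef_iff_dotProduct_mulVec.mpr ⟨isHermitian_tmul X, fun x hx => ?_⟩
      have h1 : star x ⬝ᵥ ((Xᵀ * X) *ᵥ x) = (X *ᵥ x) ⬝ᵥ (X *ᵥ x) := by
        rw [star_trivial, ← Matrix.mulVec_mulVec, Matrix.dotProduct_mulVec,
          Matrix.vecMul_transpose]
      rw [h1]
      refine hvv _ fun h0 => hx (hXinj ?_)
      simpa [Matrix.mulVecLin_apply] using h0
    exact hpd.det_pos.ne'.isUnit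
  have hXB : Yh = X * ((Xᵀ * X)⁻¹ * (Xᵀ * Y)) := by
    simp only [hYh, ols, Matrix.mul_assoc]
  have hXtYh : Xᵀ * Yh = Xᵀ * Y := by
    rw [hXB, ← Matrix.mul_assoc, ← Matrix.mul_assoc, Matrix.mul_nonsing_inv _ hdet,
      Matrix.one_mul]
  have hXtR : Xᵀ * (Yh - Y) = 0 := by rw [Matrix.mul_sub, hXtYh, sub_self]
  -- Pythagoras
  have pyth : ∀ G : Matrix (Fin D) (Fin C) ℝ,
      frobSq (X * G - Y) = frobSq (X * G - Yh) + frobSq (Yh - Y) := by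
    intro G
    have hsplit : X * G - Y = (X * (G - (Xᵀ * X)⁻¹ * (Xᵀ * Y))) + (Yh - Y) := by
      rw [Matrix.mul_sub, ← hXB]
      abel
    rw [hsplit, frobSq_pyth _ _ (cross_zero X _ _ hXtR), Matrix.mul_sub, ← hXB]
  -- total = top + tail
  have htot : ∑ i, μ i = sumTopEig (isHermitian_mult Yh) K + sumTailEig (isHermitian_mult Yh) K := by
    unfold sumTopEig sumTailEig
    rw [← Finset.sum_add_distrib]
    refine Finset.sum_congr rfl fun i _ => ?_
    by_cases h : (i : ℕ) < K
    · rw [if_pos h, if_neg (by omega)]; exact (add_zero _).symm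
    · rw [if_neg h, if_pos (by omega)]; exact (zero_add _).symm
  -- achievability
  have hach : ∃ V₀ : Matrix (Fin D) (Fin K) ℝ, ∃ W₀ : Matrix (Fin K) (Fin C) ℝ,
      frobSq (X * V₀ * W₀ - Y) = sumTailEig (isHermitian_mult Yh) K + frobSq (Yh - Y) := by
    set B2 : Matrix (Fin D) (Fin C) ℝ := (Xᵀ * X)⁻¹ * (Xᵀ * Y) with hB2
    set emb : Fin K → Fin N := Fin.castLE hKN.le with hemb
    have hμpos : ∀ k : Fin K, 0 < μ (emb k) := fun k => hμposK (emb k) k.isLt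
    set V₀ : Matrix (Fin D) (Fin K) ℝ :=
      Matrix.of fun d k => ((μ (emb k))⁻¹ • ((B2 * Yhᵀ) *ᵥ w (emb k))) d with hV₀
    have hXV₀ : ∀ k : Fin K, (X *ᵥ fun d => V₀ d k) = w (emb k) := by
      intro k
      have h1 : (fun d => V₀ d k) = (μ (emb k))⁻¹ • ((B2 * Yhᵀ) *ᵥ w (emb k)) := rfl
      have hμe : eigDesc (isHermitian_mult Yh) (emb k) = μ (emb k) := rfl
      rw [h1, Matrix.mulVec_smul, Matrix.mulVec_mulVec, ← Matrix.mul_assoc, ← hXB,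
        hw_eig (emb k), hμe, smul_smul, inv_mul_cancel₀ (ne_of_gt (hμpos k)), one_smul]
    set U : Matrix (Fin N) (Fin K) ℝ := X * V₀ with hU
    have hUe : ∀ (i : Fin N) (k : Fin K), U i k = w (emb k) i := by
      intro i k
      have h2 := congrFun (hXV₀ k) i
      simpa [hU, Matrix.mul_apply, mulVec, dotProduct] using h2
    set W₀ : Matrix (Fin K) (Fin C) ℝ := Uᵀ * Yh with hW₀
    refine ⟨V₀, W₀, ?_⟩
    have hXVW : X * (V₀ * W₀) = U * W₀ := by rw [← Matrix.mul_assoc, ← hU]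
    have hcolU : ∀ j, (fun i => (U * W₀) i j)
        = ∑ k : Fin K, ((w (emb k) ⬝ᵥ (fun a => Yh a j)) • w (emb k)) := by
      intro j
      funext i
      rw [Finset.sum_apply]
      simp only [Pi.smul_apply, smul_eq_mul]
      rw [Matrix.mul_apply]
      refine Finset.sum_congr rfl fun k _ => ?_
      rw [hUe i k]
      have hW : W₀ k j = w (emb k) ⬝ᵥ (fun a => Yh a j) := by
        rw [hW₀, Matrix.mul_apply]
        simp only [transpose_apply]
        exact Finset.sum_congr rfl fun a _ => by rw [hUe a k]
      rw [hW]
      ring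
    have hfrob : frobSq (U * W₀ - Yh) = sumTailEig (isHermitian_mult Yh) K := by
      rw [frobSq_cols]
      have hterm : ∀ j : Fin C,
          (fun i => (U * W₀ - Yh) i j) ⬝ᵥ (fun i => (U * W₀ - Yh) i j)
          = ∑ i : Fin N, if K ≤ (i : ℕ) then ((w i ⬝ᵥ (fun a => Yh a j)) ^ 2) else 0 := by
        intro j
        set yj : Fin N → ℝ := fun a => Yh a j with hyj
        have hcolsub : (fun i => (U * W₀ - Yh) i j)
            = (∑ k : Fin K, ((w (emb k) ⬝ᵥ yj) • w (emb k))) - yj := by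
          funext i
          rw [Matrix.sub_apply, Pi.sub_apply]
          rw [congrFun (hcolU j) i]
        rw [hcolsub, hdot_sub_comm]
        have hre : (∑ k : Fin K, ((w (emb k) ⬝ᵥ yj) • w (emb k)))
            = ∑ i : Fin N, (if (i : ℕ) < K then w i ⬝ᵥ yj else 0) • w i := by
          rw [sum_emb hKN.le (fun i => (w i ⬝ᵥ yj) • w i)]
          refine Finset.sum_congr rfl fun i _ => ?_
          by_cases h : (i : ℕ) < K
          · rw [if_pos h, if_pos h]
          · rw [if_neg h, if_neg h, zero_smul]
        rw [hre, dot_expand w hw_on yj _]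
        have h3 : ∑ i : Fin N, ((if (i : ℕ) < K then w i ⬝ᵥ yj else 0) - w i ⬝ᵥ yj) ^ 2
            = ∑ i : Fin N, if K ≤ (i : ℕ) then ((w i ⬝ᵥ yj) ^ 2) else 0 := by
          refine Finset.sum_congr rfl fun i _ => ?_
          by_cases h : (i : ℕ) < K
          · rw [if_pos h, if_neg (by omega), sub_self]
            norm_num
          · rw [if_neg h, if_pos (by omega), zero_sub, neg_sq]
        rw [h3, hpar yj]
        ring
      rw [Finset.sum_congr rfl fun j (_ : j ∈ Finset.univ) => hterm j, Finset.sum_comm]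
      unfold sumTailEig
      refine Finset.sum_congr rfl fun i _ => ?_
      by_cases h : K ≤ (i : ℕ)
      · simp only [if_pos h]
        exact hμ_from_w i
      · simp only [if_neg h]
        simp
    have hassoc : frobSq (X * V₀ * W₀ - Y) = frobSq (X * (V₀ * W₀) - Y) := by
      rw [Matrix.mul_assoc]
    rw [hassoc, pyth (V₀ * W₀), hXVW, hfrob]
  -- minimal value bound for the optimum
  have hoptbound : frobSq (X * Vs * Ws - Yh) ≤ sumTailEig (isHermitian_mult Yh) K := by
    obtain ⟨V₀, W₀, hV₀⟩ := hach
    have h1 := hmin V₀ W₀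
    rw [hV₀] at h1
    have h2 : frobSq (X * Vs * Ws - Y) = frobSq (X * Vs * Ws - Yh) + frobSq (Yh - Y) := by
      rw [Matrix.mul_assoc]
      exact pyth (Vs * Ws)
    linarith
  -- lower bound via an orthonormal basis of the optimal column space
  set A : Matrix (Fin N) (Fin C) ℝ := X * (Vs * Ws) with hA
  have hAeq : X * Vs * Ws = A := by rw [hA, Matrix.mul_assoc]
  obtain ⟨f, hf_on, hf_mem, hf_exp⟩ := on_range A
  have hrkA : (A.rank : ℕ) ≤ K := by
    calc A.rank ≤ (Vs * Ws).rank := Matrix.rank_mul_le_right X (Vs * Ws)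
      _ ≤ Vs.rank := Matrix.rank_mul_le_left Vs Ws
      _ ≤ K := by simpa using Matrix.rank_le_card_width Vs
  set c : Fin N → ℝ := fun i => ∑ l, (w i ⬝ᵥ f l) ^ 2 with hcdef
  have hc0 : ∀ i, 0 ≤ c i := fun i => Finset.sum_nonneg fun l _ => sq_nonneg _
  have hbessel : ∀ x : Fin N → ℝ, 0 ≤ x ⬝ᵥ x - ∑ l, (f l ⬝ᵥ x) ^ 2 := by
    intro x
    have h := dot_expand f hf_on x (fun l => f l ⬝ᵥ x)
    have h0 := hvv0 (x - ∑ l, (f l ⬝ᵥ x) • f l)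
    rw [h] at h0
    simpa using h0
  have hc1 : ∀ i, c i ≤ 1 := by
    intro i
    have h := hbessel (w i)
    have hcomm : ∑ l, (f l ⬝ᵥ w i) ^ 2 = c i :=
      Finset.sum_congr rfl fun l _ => by rw [dotProduct_comm]
    have hwi : w i ⬝ᵥ w i = 1 := by rw [hw_on i i]; simp
    rw [hwi, hcomm] at h
    linarith
  have hcsum : ∑ i, c i = (A.rank : ℝ) := by
    have hswap : ∑ i, c i = ∑ l, ∑ i : Fin N, (w i ⬝ᵥ f l) ^ 2 := Finset.sum_comm
    have hone : ∀ l, ∑ i : Fin N, (w i ⬝ᵥ f l) ^ 2 = 1 := by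
      intro l
      rw [← hpar (f l), hf_on l l]
      simp
    rw [hswap, Finset.sum_congr rfl fun l _ => hone l]
    simp
  have hcsK : ∑ i, c i ≤ (K : ℝ) := by rw [hcsum]; exact_mod_cast hrkA
  have hlow : (∑ i : Fin N, if (i : ℕ) < K then μ i else 0) ≤ ∑ i, μ i * c i := by
    have hAY : frobSq (A - Yh) ≤ sumTailEig (isHermitian_mult Yh) K := hAeq ▸ hoptbound
    have hlower : ∑ i, μ i - ∑ i, μ i * c i ≤ frobSq (A - Yh) := by
      rw [frobSq_sub_comm, frobSq_cols]
      have hperj : ∀ j : Fin C,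
          ((fun a => Yh a j) ⬝ᵥ (fun a => Yh a j) - ∑ l, (f l ⬝ᵥ (fun a => Yh a j)) ^ 2)
          ≤ (fun i => (Yh - A) i j) ⬝ᵥ (fun i => (Yh - A) i j) := by
        intro j
        have hajm : (fun a => A a j) ∈ LinearMap.range A.mulVecLin := col_mem_range A j
        have haje := hf_exp _ hajm
        have hcoldiff : (fun i => (Yh - A) i j)
            = (fun a => Yh a j) - ∑ l, (f l ⬝ᵥ (fun a => A a j)) • f l := by
          funext i
          rw [Matrix.sub_apply, Pi.sub_apply, ← congrFun haje i]
        rw [hcoldiff, dot_expand f hf_on _ _]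
        have hnn := Finset.sum_nonneg (fun l (_ : l ∈ Finset.univ) =>
          sq_nonneg ((f l ⬝ᵥ (fun a => A a j)) - f l ⬝ᵥ (fun a => Yh a j)))
        linarith
      have hsum1 : ∑ j, ((fun a => Yh a j) ⬝ᵥ (fun a => Yh a j)) = ∑ i, μ i := by
        refine Eq.trans (Finset.sum_congr rfl fun j _ => hpar _) ?_
        rw [Finset.sum_comm]
        exact Finset.sum_congr rfl fun i _ => hμ_from_w i
      have hsum2 : ∑ j, ∑ l, (f l ⬝ᵥ (fun a => Yh a j)) ^ 2 = ∑ i, μ i * c i := by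
        rw [Finset.sum_comm]
        rw [Finset.sum_congr rfl fun l (_ : l ∈ Finset.univ) => hcolsum (f l), Finset.sum_comm]
        refine Finset.sum_congr rfl fun i _ => ?_
        rw [Finset.mul_sum]
      have hsumall := Finset.sum_le_sum (fun j (_ : j ∈ Finset.univ) => hperj j)
      rw [Finset.sum_sub_distrib] at hsumall
      calc ∑ i, μ i - ∑ i, μ i * c i
          = ∑ j, ((fun a => Yh a j) ⬝ᵥ (fun a => Yh a j))
            - ∑ j, ∑ l, (f l ⬝ᵥ (fun a => Yh a j)) ^ 2 := by rw [hsum1, hsum2]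
        _ ≤ _ := hsumall
    have htot' : ∑ i, μ i
        = sumTopEig (isHermitian_mult Yh) K + sumTailEig (isHermitian_mult Yh) K := htot
    have hTopEq : sumTopEig (isHermitian_mult Yh) K
        = ∑ i : Fin N, if (i : ℕ) < K then μ i else 0 := rfl
    rw [← hTopEq]
    linarith
  have hc1K : ∀ i : Fin N, (i : ℕ) < K → c i = 1 := by
    refine kyfan_eq hKN μ c hμ_anti' (hμ0 _) hc0 hc1 hcsK hlow ?_
    exact fun i hi => hgapK i hi
  have hwmem : ∀ i : Fin N, (i : ℕ) < K → w i ∈ LinearMap.range A.mulVecLin := by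
    intro i hi
    have h := dot_expand f hf_on (w i) (fun l => f l ⬝ᵥ w i)
    have hci : ∑ l, (f l ⬝ᵥ w i) ^ 2 = 1 := by
      have hcomm : ∑ l, (f l ⬝ᵥ w i) ^ 2 = c i :=
        Finset.sum_congr rfl fun l _ => by rw [dotProduct_comm]
      rw [hcomm, hc1K i hi]
    have hwi : w i ⬝ᵥ w i = 1 := by rw [hw_on i i]; simp
    have hv0 : w i - ∑ l, (f l ⬝ᵥ w i) • f l = 0 := by
      apply dotProduct_self_eq_zero.mp
      rw [h, hci, hwi]
      simp
    have hwe : w i = ∑ l, (f l ⬝ᵥ w i) • f l := by rwa [sub_eq_zero] at hv0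
    rw [hwe]
    exact Submodule.sum_mem _ fun l _ => Submodule.smul_mem _ _ (hf_mem l)
  -- top eigenspace is contained in the optimal column space
  have hTop_le : topEigSpace (isHermitian_mult Yh) K ≤ LinearMap.range A.mulVecLin := by
    refine iSup_le ?_
    rintro ⟨i, hi⟩ x hx
    have hx' : (Yh * Yhᵀ) *ᵥ x = eigDesc (isHermitian_mult Yh) i • x := by
      rw [LinearMap.mem_ker, LinearMap.sub_apply, LinearMap.smul_apply, LinearMap.id_apply,
        sub_eq_zero] at hx
      exact hx
    have hcoef : ∀ j : Fin N, ¬ ((j : ℕ) < K) → w j ⬝ᵥ x = 0 := by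
      intro j hj
      have h1 : w j ⬝ᵥ ((Yh * Yhᵀ) *ᵥ x) = μ j * (w j ⬝ᵥ x) := by
        rw [Matrix.dotProduct_mulVec]
        have hsym : (Yh * Yhᵀ)ᵀ = Yh * Yhᵀ := by
          have hh := isHermitian_mult Yh
          rwa [Matrix.IsHermitian, Matrix.conjTranspose_eq_transpose_of_trivial] at hh
        have hvm : w j ᵥ* (Yh * Yhᵀ) = (Yh * Yhᵀ) *ᵥ w j := by
          rw [← Matrix.vecMul_transpose, hsym]
        rw [hvm, hw_eig j, smul_dotProduct, smul_eq_mul]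
      have h2 : w j ⬝ᵥ ((Yh * Yhᵀ) *ᵥ x) = μ i * (w j ⬝ᵥ x) := by
        rw [hx', dotProduct_smul, smul_eq_mul]
      have h3 : μ j * (w j ⬝ᵥ x) = μ i * (w j ⬝ᵥ x) := by rw [← h1, h2]
      by_contra hne0
      have hji : μ j ≤ μ KN := hμ_anti' KN j (by rw [Fin.le_def]; simp only [hKNdef]; omega)
      have hgi := hgapK i hi
      have : μ j = μ i := mul_right_cancel₀ hne0 h3
      linarith
    have hx_expand := hw_comp x
    rw [hx_expand]
    refine Submodule.sum_mem _ fun j _ => ?_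
    by_cases hj : (j : ℕ) < K
    · exact Submodule.smul_mem _ _ (hwmem j hj)
    · rw [hcoef j hj, zero_smul]
      exact Submodule.zero_mem _
  -- dimension of the top eigenspace is at least K
  have hK_le : K ≤ Module.finrank ℝ (topEigSpace (isHermitian_mult Yh) K) := by
    set u : Fin K → (Fin N → ℝ) := fun k => w (Fin.castLE hKN.le k) with hu
    have hli : LinearIndependent ℝ u := by
      rw [Fintype.linearIndependent_iff]
      intro g hg k
      have h0 := congrArg (fun z => u k ⬝ᵥ z) hg
      simp only [dotProduct_zero] at h0
      rw [dot_sum (fun i => g i • u i) (u k)] at h0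
      rw [Finset.sum_eq_single k] at h0
      · rw [dotProduct_smul, smul_eq_mul] at h0
        have : u k ⬝ᵥ u k = 1 := by rw [hu, hw_on]; simp
        rw [this, mul_one] at h0
        exact h0
      · intro m _ hm
        rw [dotProduct_smul, smul_eq_mul, hu]
        have : w (Fin.castLE hKN.le k) ⬝ᵥ w (Fin.castLE hKN.le m) = 0 := by
          rw [hw_on]
          have : Fin.castLE hKN.le k ≠ Fin.castLE hKN.le m :=
            fun hEq => hm.symm (Fin.castLE_injective hKN.le hEq)
          simp [this]
        rw [this, mul_zero]
      · intro hk
        exact absurd (Finset.mem_univ k) hk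
    have hspan : Submodule.span ℝ (Set.range u) ≤ topEigSpace (isHermitian_mult Yh) K := by
      rw [Submodule.span_le]
      rintro _ ⟨k, rfl⟩
      have hk : ((Fin.castLE hKN.le k : Fin N) : ℕ) < K := k.isLt
      refine Submodule.mem_iSup_of_mem ⟨Fin.castLE hKN.le k, hk⟩ ?_
      rw [LinearMap.mem_ker, LinearMap.sub_apply, LinearMap.smul_apply, LinearMap.id_apply,
        sub_eq_zero]
      exact hw_eig _
    have h1 : Module.finrank ℝ (Submodule.span ℝ (Set.range u)) = K := by
      rw [finrank_span_eq_card hli, Fintype.card_fin]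
    calc K = _ := h1.symm
      _ ≤ _ := Submodule.finrank_mono hspan
  -- conclude
  have hfrA : Module.finrank ℝ (LinearMap.range A.mulVecLin) ≤ K := hrkA
  have hrange_eq : LinearMap.range A.mulVecLin = topEigSpace (isHermitian_mult Yh) K :=
    (Submodule.eq_of_le_of_finrank_le hTop_le (le_trans hfrA hK_le)).symm
  have hS1 : LinearMap.range A.mulVecLin ≤ LinearMap.range (X * Vs).mulVecLin := by
    rintro x ⟨v, rfl⟩
    refine ⟨Ws *ᵥ v, ?_⟩
    rw [Matrix.mulVecLin_apply, Matrix.mulVecLin_apply, Matrix.mulVec_mulVec, Matrix.mul_assoc]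
  have hfr1 : Module.finrank ℝ (LinearMap.range (X * Vs).mulVecLin) ≤ K := by
    exact (by simpa using Matrix.rank_le_card_width (X * Vs) : (X * Vs).rank ≤ K)
  have hfinal : LinearMap.range A.mulVecLin = LinearMap.range (X * Vs).mulVecLin := by
    refine Submodule.eq_of_le_of_finrank_le hS1 ?_
    refine le_trans hfr1 ?_
    rw [hrange_eq]
    exact hK_le
  rw [← hfinal, hrange_eq]



end
end

section
/- Let Y ∈ ℝ^{N×C}, let X ∈ ℝ^{N×D} have full column rank D, let 1 ≤ K ≤ min(C, D), and assume λ_K(YYᵀ) > λ_{K+1}(YYᵀ) so that the top-K eigenspace S of YYᵀ is a well-defined K-dimensional subspace of ℝ^N. If S is contained in the column space of X, then the OLS prediction Ŷ := X(XᵀX)⁻¹XᵀY satisfies ‖Y − Ŷ‖_F² ≤ ‖Y‖_F² − (λ_1(YYᵀ) + … + λ_K(YYᵀ)). -/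
open Matrix BigOperators

noncomputable section

section Aux

/-- A square real matrix `AᵀA` from a full-column-rank `A` has unit determinant. -/
theorem aux_isUnit_det {N D : ℕ} (X : Matrix (Fin N) (Fin D) ℝ) (hrank : X.rank = D)
    : IsUnit (Xᵀ * X).det := by
  have hinj : ∀ w : Fin D → ℝ, X *ᵥ w = 0 → w = 0 := by
    have hker : LinearMap.ker X.mulVecLin = ⊥ := by
      have h1 := X.mulVecLin.finrank_range_add_finrank_ker
      have h2 : Module.finrank ℝ (Fin D → ℝ) = D := by simp
      rw [h2] at h1
      have h3 : Module.finrank ℝ (LinearMap.range X.mulVecLin) = D := hrank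
      have h4 : Module.finrank ℝ (LinearMap.ker X.mulVecLin) = 0 := by omega
      exact Submodule.finrank_eq_zero.mp h4
    intro w hw
    have : w ∈ LinearMap.ker X.mulVecLin := by
      simpa [LinearMap.mem_ker, Matrix.mulVecLin_apply] using hw
    simpa [hker] using this
  have hPD : (Xᵀ * X).PosDef := by
    refine Matrix.PosDef.of_dotProduct_mulVec_pos (isHermitian_tmul X) fun x hx => ?_
    have hstar : star x = x := by simp
    rw [hstar, ← Matrix.mulVec_mulVec, Matrix.dotProduct_mulVec, Matrix.vecMul_transpose]
    have hne : X *ᵥ x ≠ 0 := fun h => hx (hinj x h)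
    have hnn : 0 ≤ (X *ᵥ x) ⬝ᵥ (X *ᵥ x) :=
      Finset.sum_nonneg fun i _ => mul_self_nonneg _
    refine lt_of_le_of_ne hnn fun h => hne ?_
    exact dotProduct_self_eq_zero.mp h.symm
  exact hPD.det_pos.ne'.isUnit

end Aux

theorem frobSq_eq_trace {m n : ℕ} (M : Matrix (Fin m) (Fin n) ℝ) :
    frobSq M = Matrix.trace (Mᵀ * M) := by
  unfold frobSq
  simp only [Matrix.trace, Matrix.diag, Matrix.mul_apply, Matrix.transpose_apply, sq]
  exact Finset.sum_comm


/-- Step 5 of Theorem 2: if the top-`K` eigenspace of `YYᵀ` is contained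
in the column space of `X`, then the OLS prediction `Ŷ` of `Y` from `X` satisfies
`‖Y − Ŷ‖_F² ≤ ‖Y‖_F² − (λ_1(YYᵀ) + … + λ_K(YYᵀ))`. -/


theorem stmt_12 {N D C K : ℕ}
    (Y : Matrix (Fin N) (Fin C) ℝ) (X : Matrix (Fin N) (Fin D) ℝ)
    (hrank : X.rank = D) (hK1 : 1 ≤ K) (hKC : K ≤ C) (hKD : K ≤ D) (hKN : K < N)
    -- eigen-gap λ_K(YYᵀ) > λ_{K+1}(YYᵀ), so the top-K eigenspace is K-dimensional
    (hgap : eigDesc (isHermitian_mult Y) ⟨K - 1, by omega⟩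
          > eigDesc (isHermitian_mult Y) ⟨K, hKN⟩)
    -- the top-K eigenspace of YYᵀ is contained in the column space of X
    (hsub : topEigSpace (isHermitian_mult Y) K ≤ LinearMap.range X.mulVecLin) :
    frobSq (Y - ols X Y) ≤ frobSq Y - sumTopEig (isHermitian_mult Y) K := by
  classical
  -- abbreviations
  have hM : (Y * Yᵀ).IsHermitian := isHermitian_mult Y
  set P : Matrix (Fin N) (Fin N) ℝ := X * (Xᵀ * X)⁻¹ * Xᵀ with hPdef
  have hdet : IsUnit (Xᵀ * X).det := aux_isUnit_det X hrank
  have hPX : P * X = X := by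
    calc P * X = X * ((Xᵀ * X)⁻¹ * (Xᵀ * X)) := by
          simp only [hPdef, Matrix.mul_assoc]
      _ = X := by rw [Matrix.nonsing_inv_mul _ hdet, Matrix.mul_one]
  have hAinvT : ((Xᵀ * X)⁻¹)ᵀ = (Xᵀ * X)⁻¹ := by
    rw [Matrix.transpose_nonsing_inv, Matrix.transpose_mul, Matrix.transpose_transpose]
  have hPt : Pᵀ = P := by
    simp only [hPdef, Matrix.transpose_mul, Matrix.transpose_transpose, hAinvT,
      Matrix.mul_assoc]
  have hPP : P * P = P := by
    calc P * P = ((P * X) * (Xᵀ * X)⁻¹) * Xᵀ := by simp only [hPdef, Matrix.mul_assoc]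
      _ = P := by rw [hPX]
  -- reduce to a trace inequality
  have hols : ols X Y = P * Y := rfl
  have hexp : (Y - P * Y)ᵀ * (Y - P * Y) = Yᵀ * Y - Yᵀ * (P * Y) := by
    have h1 : (P * Y)ᵀ = Yᵀ * P := by rw [Matrix.transpose_mul, hPt]
    have h2 : Yᵀ * P * (P * Y) = Yᵀ * (P * Y) := by
      calc Yᵀ * P * (P * Y) = Yᵀ * ((P * P) * Y) := by simp only [Matrix.mul_assoc]
        _ = Yᵀ * (P * Y) := by rw [hPP, Matrix.mul_assoc]
    have h3 : Yᵀ * P * Y = Yᵀ * (P * Y) := by rw [Matrix.mul_assoc]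
    rw [Matrix.transpose_sub, Matrix.sub_mul, Matrix.mul_sub, Matrix.mul_sub, h1, h2, h3]
    abel
  have hfrob : frobSq (Y - ols X Y) = frobSq Y - Matrix.trace (P * (Y * Yᵀ)) := by
    rw [hols, frobSq_eq_trace, hexp, Matrix.trace_sub, frobSq_eq_trace]
    congr 1
    rw [Matrix.trace_mul_comm, Matrix.mul_assoc]
  rw [hfrob]
  have main : sumTopEig (isHermitian_mult Y) K ≤ Matrix.trace (P * (Y * Yᵀ)) := by
    -- spectral decomposition
    set V : Matrix (Fin N) (Fin N) ℝ := (hM.eigenvectorUnitary : Matrix (Fin N) (Fin N) ℝ)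
      with hVdef
    have hVtV : Vᵀ * V = 1 := by
      have h := Matrix.UnitaryGroup.star_mul_self hM.eigenvectorUnitary
      simpa [Matrix.star_eq_conjTranspose,
        Matrix.conjTranspose_eq_transpose_of_trivial] using h
    have hspec : Y * Yᵀ = V * Matrix.diagonal hM.eigenvalues * Vᵀ := by
      have h := hM.spectral_theorem
      simpa [RCLike.ofReal_real_eq_id, Function.id_comp, Matrix.star_eq_conjTranspose,
        Matrix.conjTranspose_eq_transpose_of_trivial] using h
    set Q : Matrix (Fin N) (Fin N) ℝ := Vᵀ * (P * V) with hQdef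
    have htr : Matrix.trace (P * (Y * Yᵀ)) = ∑ j, Q j j * hM.eigenvalues j := by
      conv_lhs => rw [hspec]
      have h1 : P * (V * Matrix.diagonal hM.eigenvalues * Vᵀ)
          = (P * V * Matrix.diagonal hM.eigenvalues) * Vᵀ := by
        simp only [Matrix.mul_assoc]
      have h2 : Vᵀ * (P * V * Matrix.diagonal hM.eigenvalues)
          = Q * Matrix.diagonal hM.eigenvalues := by
        simp only [hQdef, Matrix.mul_assoc]
      rw [h1, Matrix.trace_mul_comm, h2]
      simp [Matrix.trace, Matrix.diag, Matrix.mul_diagonal]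
    -- diagonal entries of Q are nonnegative
    have hQnn : ∀ j, 0 ≤ Q j j := by
      intro j
      have hQ : Q = (P * V)ᵀ * (P * V) := by
        rw [Matrix.transpose_mul, hPt]
        calc Vᵀ * (P * V) = Vᵀ * ((P * P) * V) := by rw [hPP]
          _ = Vᵀ * P * (P * V) := by simp only [Matrix.mul_assoc]
      rw [hQ, Matrix.mul_apply]
      exact Finset.sum_nonneg fun i _ => by
        simp only [Matrix.transpose_apply]; exact mul_self_nonneg _
    -- eigenvalues are nonnegative
    have hPSD : (Y * Yᵀ).PosSemidef := by
      have h := Matrix.posSemidef_self_mul_conjTranspose Y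
      rwa [Matrix.conjTranspose_eq_transpose_of_trivial] at h
    have hlam : ∀ j, 0 ≤ hM.eigenvalues j := fun j => hPSD.eigenvalues_nonneg j
    -- the sorting permutation
    set σ : Fin N → Fin N := fun i => Tuple.sort hM.eigenvalues i.rev with hσdef
    have hσinj : Function.Injective σ := fun a b h =>
      Fin.rev_injective ((Tuple.sort hM.eigenvalues).injective h)
    -- top eigenvectors are fixed by P
    have hQ1 : ∀ i : Fin N, (i : ℕ) < K → Q (σ i) (σ i) = 1 := by
      intro i hi
      set j : Fin N := σ i with hjdef
      set v : Fin N → ℝ := ⇑(hM.eigenvectorBasis j) with hvdef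
      have hev : (Y * Yᵀ) *ᵥ v = hM.eigenvalues j • v := hM.mulVec_eigenvectorBasis j
      have hker : v ∈ LinearMap.ker
          ((Y * Yᵀ).mulVecLin - eigDesc (isHermitian_mult Y) i • LinearMap.id) := by
        have heig : eigDesc (isHermitian_mult Y) i = hM.eigenvalues j := rfl
        simp only [LinearMap.mem_ker, LinearMap.sub_apply, LinearMap.smul_apply,
          LinearMap.id_apply, Matrix.mulVecLin_apply, heig, hev, sub_self]
      have hmem : v ∈ topEigSpace (isHermitian_mult Y) K :=
        le_iSup (fun i : {i : Fin N // (i : ℕ) < K} =>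
          LinearMap.ker ((Y * Yᵀ).mulVecLin - eigDesc (isHermitian_mult Y) i.1 • LinearMap.id))
          ⟨i, hi⟩ hker
      obtain ⟨w, hw⟩ := hsub hmem
      have hPv : P *ᵥ v = v := by
        rw [← hw]
        show P *ᵥ (X *ᵥ w) = X *ᵥ w
        rw [Matrix.mulVec_mulVec, hPX]
      have hcol : ∀ i', V i' j = v i' := fun i' => hM.eigenvectorUnitary_apply i' j
      have hPVij : ∀ i', (P * V) i' j = V i' j := by
        intro i'
        have h1 : (P * V) i' j = (P *ᵥ v) i' := by
          simp only [Matrix.mul_apply, Matrix.mulVec, dotProduct, hcol]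
        rw [h1, hPv, hcol]
      have hqq : Q j j = ∑ i', V i' j * V i' j := by
        simp only [hQdef, Matrix.mul_apply, Matrix.transpose_apply, hPVij]
      have h1 : (Vᵀ * V) j j = 1 := by rw [hVtV]; simp
      rw [hqq]
      simpa [Matrix.mul_apply, Matrix.transpose_apply] using h1
    -- put everything together
    have hsum : sumTopEig (isHermitian_mult Y) K
        = ∑ i ∈ Finset.univ.filter (fun i : Fin N => (i : ℕ) < K), hM.eigenvalues (σ i) := by
      rw [sumTopEig, ← Finset.sum_filter]
      exact Finset.sum_congr rfl fun i _ => rfl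
    rw [htr, hsum]
    calc ∑ i ∈ Finset.univ.filter (fun i : Fin N => (i : ℕ) < K), hM.eigenvalues (σ i)
        = ∑ j ∈ (Finset.univ.filter (fun i : Fin N => (i : ℕ) < K)).image σ,
            hM.eigenvalues j := by
          rw [Finset.sum_image fun a _ b _ h => hσinj h]
      _ = ∑ j ∈ (Finset.univ.filter (fun i : Fin N => (i : ℕ) < K)).image σ,
            Q j j * hM.eigenvalues j := by
          refine Finset.sum_congr rfl fun j hj => ?_
          obtain ⟨i, hi, rfl⟩ := Finset.mem_image.mp hj
          rw [hQ1 i (Finset.mem_filter.mp hi).2, one_mul]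
      _ ≤ ∑ j, Q j j * hM.eigenvalues j := by
          refine Finset.sum_le_sum_of_subset_of_nonneg (Finset.subset_univ _)
            fun j _ _ => mul_nonneg (hQnn j) (hlam j)
  linarith [main]


end
end
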